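/- For a simple random walk on a finite connected graph G = (V,E), the effective resistance between two vertices satisfies R(q_1,q_2) = K(q_1,q_2)/(2|E|), where K(q_1,q_2) = H(q_1,q_2) + H(q_2,q_1) is the commute time; consequently if H(q_1,q_2) = H(q_2,q_1) (by symmetry), then R(q_1,q_2) = H(q_1,q_2)/|E|. -/

import Mathlib

set_option linter.unusedSectionVars false


open SimpleGraph

section Aux

variable {V : Type*} [Fintype V] [DecidableEq V]
variable (G : SimpleGraph V) [DecidableRel G.Adj]

/-- Graph Laplacian applied to a function. -/
def lapCT (u : V → ℝ) (a : V) : ℝ := ∑ y ∈ G.neighborFinset a, (u a - u y)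

lemma lapCT_total (u : V → ℝ) : ∑ a, lapCT G u a = 0 := by
  unfold lapCT
  simp only [Finset.sum_sub_distrib, neighborFinset_eq_filter, Finset.sum_filter]
  have key : (∑ x : V, ∑ a : V, if G.Adj x a then u a else 0)
      = ∑ x : V, ∑ a : V, if G.Adj x a then u x else 0 := by
    rw [Finset.sum_comm]
    refine Finset.sum_congr rfl fun x _ => Finset.sum_congr rfl fun a _ => ?_
    by_cases h : G.Adj x a
    · rw [if_pos ((G.adj_comm a x).mpr h), if_pos h]
    · rw [if_neg (fun hh => h ((G.adj_comm a x).mp hh)), if_neg h]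
  rw [key]
  ring

lemma lapCT_sub (u v : V → ℝ) (a : V) :
    lapCT G (fun x => u x - v x) a = lapCT G u a - lapCT G v a := by
  unfold lapCT
  rw [← Finset.sum_sub_distrib]
  congr 1; ext y; ring

lemma lapCT_div (u : V → ℝ) (c : ℝ) (a : V) :
    lapCT G (fun x => u x / c) a = lapCT G u a / c := by
  unfold lapCT
  rw [Finset.sum_div]
  congr 1; ext y; ring

lemma lapCT_const (hconn : G.Connected) (u : V → ℝ)
    (hu : ∀ a, lapCT G u a = 0) (a b : V) : u a = u b := by
  obtain ⟨a₀, -, hmax⟩ := Finset.exists_max_image Finset.univ u ⟨a, Finset.mem_univ a⟩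
  have step : ∀ x y : V, G.Adj x y → u x = u a₀ → u y = u a₀ := by
    intro x y hadj hx
    have hnn : ∀ z ∈ G.neighborFinset x, (0:ℝ) ≤ u x - u z := by
      intro z _
      have := hmax z (Finset.mem_univ z)
      rw [hx]; linarith
    have := (Finset.sum_eq_zero_iff_of_nonneg hnn).mp (hu x) y
      ((G.mem_neighborFinset x y).mpr hadj)
    linarith [hx]
  have walk : ∀ x y : V, G.Walk x y → u x = u a₀ → u y = u a₀ := by
    intro x y p
    induction p with
    | nil => exact fun h => h
    | cons hadj p ih => exact fun h => ih (step _ _ hadj h)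
  have ha : u a = u a₀ := walk a₀ a ((hconn a₀ a).some) rfl
  have hb : u b = u a₀ := walk a₀ b ((hconn a₀ b).some) rfl
  rw [ha, hb]

end Aux

/-- Commute-time identity: in a finite connected graph with unit conductances,
if `H` satisfies the expected-hitting-time equations of the simple random walk
and `φ` is a unit-current potential between `q₁` and `q₂` (harmonic off
`{q₁,q₂}`, with unit current flowing out of `q₁`), so that the effective
resistance is `R(q₁,q₂) = φ q₁ − φ q₂`, then
`R(q₁,q₂) = (H(q₁,q₂) + H(q₂,q₁))/(2|E|)`; consequently, if
`H(q₁,q₂) = H(q₂,q₁)` then `R(q₁,q₂) = H(q₁,q₂)/|E|`. -/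
theorem stmt_17 {V : Type*} [Fintype V] [DecidableEq V]
    (G : SimpleGraph V) [DecidableRel G.Adj] (hconn : G.Connected)
    (q₁ q₂ : V) (hne : q₁ ≠ q₂)
    (H : V → V → ℝ)
    (hH0 : ∀ b, H b b = 0)
    (hHrec : ∀ a b, a ≠ b →
      H a b = 1 + (G.degree a : ℝ)⁻¹ * ∑ y ∈ G.neighborFinset a, H y b)
    (φ : V → ℝ)
    (hharm : ∀ a, a ≠ q₁ → a ≠ q₂ → ∑ y ∈ G.neighborFinset a, (φ a - φ y) = 0)
    (hcurrent : ∑ y ∈ G.neighborFinset q₁, (φ q₁ - φ y) = 1) :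
    φ q₁ - φ q₂ = (H q₁ q₂ + H q₂ q₁) / (2 * G.edgeFinset.card) ∧
    (H q₁ q₂ = H q₂ q₁ → φ q₁ - φ q₂ = H q₁ q₂ / G.edgeFinset.card) := by
  -- degrees are positive
  have hdeg : ∀ a : V, 0 < G.degree a := by
    intro a
    have hb : ∃ b : V, b ≠ a := by
      rcases eq_or_ne a q₁ with rfl | h
      · exact ⟨q₂, fun h => hne h.symm⟩
      · exact ⟨q₁, fun h' => h h'.symm⟩
    obtain ⟨b, hba⟩ := hb
    obtain ⟨p⟩ := hconn a b
    cases p with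
    | nil => exact absurd rfl hba.symm
    | cons hadj _ => exact (G.degree_pos_iff_exists_adj a).mpr ⟨_, hadj⟩
  set E : ℝ := (G.edgeFinset.card : ℝ) with hEdef
  have hsum : ∑ v, (G.degree v : ℝ) = 2 * E := by
    rw [hEdef]
    exact_mod_cast congrArg (Nat.cast : ℕ → ℝ) (G.sum_degrees_eq_twice_card_edges)
  have h2E : (0:ℝ) < 2 * E := by
    rw [← hsum]
    exact Finset.sum_pos' (fun i _ => by positivity)
      ⟨q₁, Finset.mem_univ q₁, by exact_mod_cast hdeg q₁⟩
  have hEne : E ≠ 0 := by exact ne_of_gt (by linarith)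
  -- Laplacian of hitting-time potentials
  have lapH : ∀ b a : V, a ≠ b → lapCT G (fun x => H x b) a = (G.degree a : ℝ) := by
    intro b a hab
    have hd : (G.degree a : ℝ) ≠ 0 := by exact_mod_cast (hdeg a).ne'
    unfold lapCT
    rw [Finset.sum_sub_distrib, Finset.sum_const, card_neighborFinset_eq_degree,
      nsmul_eq_mul]
    beta_reduce
    rw [hHrec a b hab]
    field_simp
    ring
  -- Laplacian at the target: total sum identity
  have lapHb : ∀ b : V, lapCT G (fun x => H x b) b = (G.degree b : ℝ) - 2 * E := by
    intro b
    have htot := lapCT_total G (fun x => H x b)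
    rw [← Finset.add_sum_erase _ _ (Finset.mem_univ b)] at htot
    have hrest : ∑ a ∈ Finset.univ.erase b, lapCT G (fun x => H x b) a
        = ∑ a ∈ Finset.univ.erase b, (G.degree a : ℝ) := by
      refine Finset.sum_congr rfl fun a ha => ?_
      exact lapH b a (Finset.ne_of_mem_erase ha)
    rw [hrest] at htot
    have : ∑ a ∈ Finset.univ.erase b, (G.degree a : ℝ)
        = 2 * E - (G.degree b : ℝ) := by
      have := Finset.add_sum_erase Finset.univ (fun a => (G.degree a : ℝ))
        (Finset.mem_univ b)
      rw [hsum] at this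
      linarith [this]
    rw [this] at htot
    linarith
  -- the combined potential
  set h : V → ℝ := fun a => H a q₂ - H a q₁ with hhdef
  have lap_h_q₁ : lapCT G h q₁ = 2 * E := by
    rw [hhdef, lapCT_sub, lapH q₂ q₁ hne, lapHb q₁]; ring
  have lap_h_q₂ : lapCT G h q₂ = -(2 * E) := by
    rw [hhdef, lapCT_sub, lapHb q₂, lapH q₁ q₂ hne.symm]; ring
  have lap_h_other : ∀ a, a ≠ q₁ → a ≠ q₂ → lapCT G h a = 0 := by
    intro a h1 h2
    rw [hhdef, lapCT_sub, lapH q₂ a h2, lapH q₁ a h1]; ring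
  -- current conservation gives lap φ q₂ = -1
  have lapφq₂ : lapCT G φ q₂ = -1 := by
    have htot := lapCT_total G φ
    rw [← Finset.add_sum_erase _ _ (Finset.mem_univ q₁)] at htot
    have hq₂mem : q₂ ∈ Finset.univ.erase q₁ :=
      Finset.mem_erase.mpr ⟨hne.symm, Finset.mem_univ q₂⟩
    rw [← Finset.add_sum_erase _ _ hq₂mem] at htot
    have hrest : ∑ a ∈ (Finset.univ.erase q₁).erase q₂, lapCT G φ a = 0 := by
      refine Finset.sum_eq_zero fun a ha => ?_
      have h2 := Finset.ne_of_mem_erase ha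
      have h1 := Finset.ne_of_mem_erase (Finset.mem_of_mem_erase ha)
      exact hharm a h1 h2
    have hlapφq₁ : lapCT G φ q₁ = 1 := hcurrent
    rw [hrest, hlapφq₁] at htot
    linarith
  -- the difference is harmonic everywhere, hence constant
  set u : V → ℝ := fun a => φ a - h a / (2 * E) with hudef
  have hu : ∀ a, lapCT G u a = 0 := by
    intro a
    rw [hudef]
    have : lapCT G (fun x => φ x - h x / (2*E)) a
        = lapCT G φ a - lapCT G h a / (2*E) := by
      rw [lapCT_sub G φ (fun x => h x / (2*E)) a, lapCT_div]
    rw [this]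
    rcases eq_or_ne a q₁ with rfl | h1
    · rw [lap_h_q₁]
      have : lapCT G φ a = 1 := hcurrent
      rw [this]
      field_simp
      ring
    · rcases eq_or_ne a q₂ with rfl | h2
      · rw [lap_h_q₂, lapφq₂]
        field_simp
        ring
      · rw [lap_h_other a h1 h2]
        have : lapCT G φ a = 0 := hharm a h1 h2
        rw [this]; ring
  have hconst := lapCT_const G hconn u hu q₁ q₂
  rw [hudef] at hconst
  simp only at hconst
  have hval : φ q₁ - φ q₂ = (h q₁ - h q₂) / (2 * E) := by
    field_simp at hconst ⊢
    linarith [hconst]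
  have hh1 : h q₁ = H q₁ q₂ := by rw [hhdef]; simp [hH0]
  have hh2 : h q₂ = -(H q₂ q₁) := by rw [hhdef]; simp [hH0]
  rw [hh1, hh2] at hval
  constructor
  · rw [hval]; ring
  · intro hsym
    rw [hval, hsym]
    field_simp
    ring
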